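/- Let n > k ≥ 1 and let λ_1 ≥ λ_2 ≥ ⋯ ≥ λ_n ≥ 0 be integers with λ_{n−k+1} = 0 and λ_1 ≥ 2. Then ∏ (λ_i + j − i)/(j − i), the product taken over all pairs (i,j) with 1 ≤ i < j ≤ n and j > n−k, is at least n(n+1)/((n−k)(n−k+1)). -/

import Mathlib

lemma weyl_telescope (m : ℕ) (hm : 1 ≤ m) : ∀ n : ℕ, m ≤ n →
    ∏ j ∈ Finset.Icc (m + 1) n, (((j : ℚ) + 1) / ((j : ℚ) - 1)) =
      ((n : ℚ) * ((n : ℚ) + 1)) / ((m : ℚ) * ((m : ℚ) + 1)) := by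
  intro n
  induction n with
  | zero => intro h; exact absurd h (by omega)
  | succ n ih =>
    intro h
    have hm0 : (m : ℚ) ≠ 0 := by exact Nat.cast_ne_zero.mpr (by omega)
    have hm1 : (m : ℚ) + 1 ≠ 0 := by positivity
    rcases eq_or_lt_of_le h with heq | hlt
    · subst heq
      rw [Finset.Icc_eq_empty (by omega), Finset.prod_empty, div_self (by positivity)]
    · have hn : m ≤ n := by omega
      have hn0 : (n : ℚ) ≠ 0 := Nat.cast_ne_zero.mpr (by omega)
      rw [Finset.prod_Icc_succ_top (by omega : m + 1 ≤ n + 1), ih hn]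
      push_cast
      field_simp
      ring_nf
      exact mul_inv_cancel₀ hn0

/-- Weyl dimension-type estimate: if `λ_1 ≥ λ_2 ≥ ⋯ ≥ λ_n ≥ 0` with
`λ_{n-k+1} = 0` and `λ_1 ≥ 2` (`1 ≤ k < n`), then
`∏_{1 ≤ i < j ≤ n, j > n-k} (λ_i + j - i)/(j - i) ≥ n(n+1)/((n-k)(n-k+1))`. -/
theorem weyl_product_bound_d_zero (n k : ℕ) (lam : ℕ → ℕ)
    (hk : 1 ≤ k) (hkn : k < n)
    (hmono : ∀ i, 1 ≤ i → i < n → lam (i + 1) ≤ lam i)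
    (hzero : lam (n - k + 1) = 0) (h2 : 2 ≤ lam 1) :
    ((n : ℚ) * ((n : ℚ) + 1)) / (((n : ℚ) - (k : ℚ)) * ((n : ℚ) - (k : ℚ) + 1)) ≤
      ∏ p ∈ (Finset.Icc 1 n ×ˢ Finset.Icc 1 n).filter
          (fun p : ℕ × ℕ => p.1 < p.2 ∧ n - k < p.2),
        (((lam p.1 : ℚ) + (p.2 : ℚ) - (p.1 : ℚ)) / ((p.2 : ℚ) - (p.1 : ℚ))) := by
  set m : ℕ := n - k with hm
  have hm1 : 1 ≤ m := by omega
  have hmn : m < n := by omega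
  have hcast : (n : ℚ) - (k : ℚ) = (m : ℚ) := by
    rw [hm, Nat.cast_sub hkn.le]
  rw [hcast]
  set f : ℕ × ℕ → ℚ := fun p =>
    ((lam p.1 : ℚ) + (p.2 : ℚ) - (p.1 : ℚ)) / ((p.2 : ℚ) - (p.1 : ℚ)) with hf
  set S : Finset (ℕ × ℕ) := (Finset.Icc 1 n ×ˢ Finset.Icc 1 n).filter
      (fun p : ℕ × ℕ => p.1 < p.2 ∧ m < p.2) with hS
  -- every factor on S is ≥ 1
  have hfac : ∀ p ∈ S, 1 ≤ f p := by
    intro p hp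
    simp only [hS, Finset.mem_filter, Finset.mem_product, Finset.mem_Icc] at hp
    have hlt : p.1 < p.2 := hp.2.1
    have hden : (0 : ℚ) < (p.2 : ℚ) - (p.1 : ℚ) := by
      have : (p.1 : ℚ) < (p.2 : ℚ) := by exact_mod_cast hlt
      linarith
    rw [hf, one_le_div hden]
    have : (0 : ℚ) ≤ (lam p.1 : ℚ) := by positivity
    linarith
  -- the subset with i = 1
  have hT : S.filter (fun p => p.1 = 1) =
      (Finset.Icc (m + 1) n).image (fun j => (1, j)) := by
    ext ⟨a, b⟩
    simp only [hS, Finset.mem_filter, Finset.mem_product, Finset.mem_Icc,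
      Finset.mem_image, Prod.mk.injEq]
    constructor
    · rintro ⟨⟨⟨_, _⟩, _, _⟩, ha⟩
      exact ⟨b, by omega, ha.symm, rfl⟩
    · rintro ⟨j, hj, h1, h2⟩
      subst h1; subst h2
      exact ⟨⟨⟨⟨by omega, by omega⟩, by omega, by omega⟩, by omega, by omega⟩, rfl⟩
  have hprodT : ((n : ℚ) * ((n : ℚ) + 1)) / ((m : ℚ) * ((m : ℚ) + 1)) ≤
      ∏ p ∈ S.filter (fun p => p.1 = 1), f p := by
    rw [hT, Finset.prod_image (by intro x _ y _ h; exact (Prod.mk.injEq _ _ _ _ ▸ h).2)]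
    rw [← weyl_telescope m hm1 n hmn.le]
    apply Finset.prod_le_prod
    · intro j hj
      simp only [Finset.mem_Icc] at hj
      have : (2 : ℚ) ≤ (j : ℚ) := by exact_mod_cast (by omega : 2 ≤ j)
      apply div_nonneg <;> linarith
    · intro j hj
      simp only [Finset.mem_Icc] at hj
      have hj2 : (2 : ℚ) ≤ (j : ℚ) := by exact_mod_cast (by omega : 2 ≤ j)
      have hden : (0 : ℚ) < (j : ℚ) - 1 := by linarith
      simp only [hf, Nat.cast_one]
      rw [div_le_div_iff_of_pos_right hden]
      have : (2 : ℚ) ≤ (lam 1 : ℚ) := by exact_mod_cast h2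
      linarith
  -- split the product
  have hsplit : (∏ p ∈ S.filter (fun p => p.1 = 1), f p) *
      (∏ p ∈ S.filter (fun p => ¬ p.1 = 1), f p) = ∏ p ∈ S, f p :=
    Finset.prod_filter_mul_prod_filter_not S _ f
  have hrest : 1 ≤ ∏ p ∈ S.filter (fun p => ¬ p.1 = 1), f p := by
    calc (1 : ℚ) = ∏ _p ∈ S.filter (fun p => ¬ p.1 = 1), (1 : ℚ) := by
          rw [Finset.prod_const_one]
      _ ≤ _ := Finset.prod_le_prod (by intro p _; norm_num)
          (fun p hp => hfac p (Finset.mem_of_mem_filter p hp))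
  have hTnn : 0 ≤ ∏ p ∈ S.filter (fun p => p.1 = 1), f p :=
    Finset.prod_nonneg fun p hp =>
      le_trans zero_le_one (hfac p (Finset.mem_of_mem_filter p hp))
  calc ((n : ℚ) * ((n : ℚ) + 1)) / ((m : ℚ) * ((m : ℚ) + 1))
      ≤ ∏ p ∈ S.filter (fun p => p.1 = 1), f p := hprodT
    _ ≤ (∏ p ∈ S.filter (fun p => p.1 = 1), f p) *
        (∏ p ∈ S.filter (fun p => ¬ p.1 = 1), f p) :=
          le_mul_of_one_le_right hTnn hrest
    _ = ∏ p ∈ S, f p := hsplit
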